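/- Let (A, I) be a Dorroh pair of algebras over a field k. Let I° be the finite dual of the algebra I, let I°_{(A)} = I_l° ∩ I_r° be the finite dual of I as an A-bimodule, and set I^d = I° ∩ I°_{(A)}. Then: (a) I^d is a subcoalgebra of I°, i.e. for every f ∈ I^d there exist finitely many f_i, g_i ∈ I^d with f(xy) = Σ f_i(x)g_i(y) for all x, y ∈ I; (b) I^d is an A°-subbicomodule of I°_{(A)}, i.e. the duals ρ_l, ρ_r of the A-actions map I^d into A°⊗I^d and I^d⊗A° respectively; (c) the coactions are compatible with the comultiplication Δ = m_I* of I^d: (Δ⊗id)ρ_r = (id⊗ρ_r)Δ, (id⊗Δ)ρ_l = (ρ_l⊗id)Δ, and (ρ_r⊗id)Δ = (id⊗ρ_l)Δ. Hence (A°, I^d) is a Dorroh pair of coalgebras. -/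

import Mathlib

section

variable {k : Type} [Field k]

/-- The finite dual `B°` of a (not necessarily unital) algebra `B`. -/
def finDual (k : Type) [Field k] (B : Type) [NonUnitalRing B] [Module k B]
    [SMulCommClass k B B] [IsScalarTower k B B] : Set (Module.Dual k B) :=
  {f | ∃ R : Submodule k B, (∀ x ∈ R, ∀ b : B, x * b ∈ R) ∧
        FiniteDimensional k (B ⧸ R) ∧ ∀ x ∈ R, f x = 0}

/-- The finite dual of a right module with action `μ`. -/
def finDualModR {A M : Type} [AddCommGroup A] [Module k A] [AddCommGroup M] [Module k M]
    (μ : M →ₗ[k] A →ₗ[k] M) : Set (Module.Dual k M) :=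
  {f | ∃ N : Submodule k M, (∀ x ∈ N, ∀ a : A, μ x a ∈ N) ∧
        FiniteDimensional k (M ⧸ N) ∧ ∀ x ∈ N, f x = 0}

/-- The finite dual of a left module with action `lμ`. -/
def finDualModL {A M : Type} [AddCommGroup A] [Module k A] [AddCommGroup M] [Module k M]
    (lμ : A →ₗ[k] M →ₗ[k] M) : Set (Module.Dual k M) :=
  {f | ∃ N : Submodule k M, (∀ x ∈ N, ∀ a : A, lμ a x ∈ N) ∧
        FiniteDimensional k (M ⧸ N) ∧ ∀ x ∈ N, f x = 0}

/-- Descend a bilinear action to a quotient by an invariant submodule. -/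
noncomputable def actQ {A M : Type} [AddCommGroup A] [Module k A] [AddCommGroup M] [Module k M]
    (t : A →ₗ[k] M →ₗ[k] M) (N : Submodule k M) (h : ∀ a x, x ∈ N → t a x ∈ N) :
    A →ₗ[k] (M ⧸ N) →ₗ[k] M ⧸ N where
  toFun a := N.mapQ N (t a) fun x hx => h a x hx
  map_add' a b := by
    apply Submodule.linearMap_qext
    ext x
    simp [Submodule.mapQ_apply]
  map_smul' c a := by
    apply Submodule.linearMap_qext
    ext x
    simp [Submodule.mapQ_apply]

lemma actQ_apply {A M : Type} [AddCommGroup A] [Module k A] [AddCommGroup M] [Module k M]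
    (t : A →ₗ[k] M →ₗ[k] M) (N : Submodule k M) (h : ∀ a x, x ∈ N → t a x ∈ N) (a : A) (x : M) :
    actQ t N h a (Submodule.Quotient.mk x) = Submodule.Quotient.mk (t a x) := by
  simp [actQ, Submodule.mapQ_apply]

lemma fdQuotKer {M V : Type} [AddCommGroup M] [Module k M] [AddCommGroup V] [Module k V]
    [FiniteDimensional k V] (g : M →ₗ[k] V) :
    FiniteDimensional k (M ⧸ LinearMap.ker g) :=
  LinearEquiv.finiteDimensional g.quotKerEquivRange.symm

/-- Descend a bilinear map to quotients by submodules on which it vanishes. -/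
noncomputable def biDescend {M₁ M₂ D : Type} [AddCommGroup M₁] [Module k M₁]
    [AddCommGroup M₂] [Module k M₂] [AddCommGroup D] [Module k D]
    (P : Submodule k M₁) (Q : Submodule k M₂) (Φ : M₁ →ₗ[k] M₂ →ₗ[k] D)
    (hP : ∀ m ∈ P, Φ m = 0) (hQ : ∀ n ∈ Q, ∀ m, Φ m n = 0) :
    (M₁ ⧸ P) →ₗ[k] (M₂ ⧸ Q) →ₗ[k] D :=
  (Q.liftQ (P.liftQ Φ fun m hm => LinearMap.mem_ker.mpr (hP m hm)).flip
    (fun n hn => LinearMap.mem_ker.mpr (by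
      apply Submodule.linearMap_qext
      ext m
      simp [hQ n hn m]))).flip

lemma biDescend_apply {M₁ M₂ D : Type} [AddCommGroup M₁] [Module k M₁]
    [AddCommGroup M₂] [Module k M₂] [AddCommGroup D] [Module k D]
    (P : Submodule k M₁) (Q : Submodule k M₂) (Φ : M₁ →ₗ[k] M₂ →ₗ[k] D)
    (hP : ∀ m ∈ P, Φ m = 0) (hQ : ∀ n ∈ Q, ∀ m, Φ m n = 0) (m : M₁) (n : M₂) :
    biDescend P Q Φ hP hQ (Submodule.Quotient.mk m) (Submodule.Quotient.mk n) = Φ m n := by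
  simp [biDescend, Submodule.liftQ_apply]

set_option maxHeartbeats 10000000 in
set_option synthInstance.maxHeartbeats 1000000 in
theorem exists_stable {A I : Type}
    [NonUnitalRing A] [Module k A] [SMulCommClass k A A] [IsScalarTower k A A]
    [NonUnitalRing I] [Module k I] [SMulCommClass k I I] [IsScalarTower k I I]
    (l : A →ₗ[k] I →ₗ[k] I) (r : I →ₗ[k] A →ₗ[k] I)
    (h1 : ∀ (a b : A) (x : I), l (a * b) x = l a (l b x))
    (h2 : ∀ (x : I) (a b : A), r x (a * b) = r (r x a) b)
    (h3 : ∀ (a : A) (x : I) (b : A), r (l a x) b = l a (r x b))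
    (h4 : ∀ (a : A) (x y : I), l a (x * y) = l a x * y)
    (h5 : ∀ (x : I) (a : A) (y : I), r x a * y = x * l a y)
    (h6 : ∀ (x y : I) (a : A), r (x * y) a = x * r y a)
    (f : Module.Dual k I)
    (hf : f ∈ finDual k I ∩ (finDualModL l ∩ finDualModR r)) :
    ∃ N : Submodule k I, FiniteDimensional k (I ⧸ N) ∧ (∀ x ∈ N, f x = 0) ∧
      (∀ x ∈ N, ∀ y : I, x * y ∈ N) ∧ (∀ x ∈ N, ∀ y : I, y * x ∈ N) ∧
      (∀ x ∈ N, ∀ a : A, l a x ∈ N) ∧ (∀ x ∈ N, ∀ a : A, r x a ∈ N) := by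
  classical
  simp only [finDual, finDualModL, finDualModR, Set.mem_inter_iff, Set.mem_setOf_eq] at hf
  obtain ⟨⟨R, hRm, hRfd, hRf⟩, ⟨Nl, hNlm, hNlfd, hNlf⟩, ⟨Nr, hNrm, hNrfd, hNrf⟩⟩ := hf
  haveI := hRfd
  haveI := hNlfd
  haveI := hNrfd
  set mI : I →ₗ[k] I →ₗ[k] I := LinearMap.mul k I with hmI
  -- induced actions on the quotients and the corresponding cofinite kernels in `A`
  set σ : A →ₗ[k] (I ⧸ Nl) →ₗ[k] I ⧸ Nl := actQ l Nl (fun a x hx => hNlm x hx a) with hσ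
  set τ : A →ₗ[k] (I ⧸ Nr) →ₗ[k] I ⧸ Nr := actQ r.flip Nr (fun a x hx => hNrm x hx a) with hτ
  set Jl : Submodule k A := LinearMap.ker σ with hJldef
  set Jr : Submodule k A := LinearMap.ker τ with hJrdef
  haveI : FiniteDimensional k (A ⧸ Jl) := fdQuotKer σ
  haveI : FiniteDimensional k (A ⧸ Jr) := fdQuotKer τ
  have hJl : ∀ a ∈ Jl, ∀ x : I, l a x ∈ Nl := by
    intro a ha x
    have h0 : σ a (Submodule.Quotient.mk x) = 0 := by
      rw [LinearMap.mem_ker.mp ha]; simp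
    rw [hσ, actQ_apply] at h0
    simpa [Submodule.Quotient.mk_eq_zero] using h0
  have hJr : ∀ a ∈ Jr, ∀ x : I, r x a ∈ Nr := by
    intro a ha x
    have h0 : τ a (Submodule.Quotient.mk x) = 0 := by
      rw [LinearMap.mem_ker.mp ha]; simp
    rw [show τ a (Submodule.Quotient.mk x) = Submodule.Quotient.mk (r.flip a x) from actQ_apply _ _ _ a x] at h0
    simpa [Submodule.Quotient.mk_eq_zero, LinearMap.flip_apply] using h0
  -- the map `β` and the cofinite kernel `KR` ⊆ I with `f (x * y) = 0` for `y ∈ KR`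
  have hβ0 : ∀ y x : I, x ∈ R → f (x * y) = 0 := fun y x hx => hRf _ (hRm x hx y)
  set β : I →ₗ[k] (I ⧸ R) →ₗ[k] k :=
    { toFun := fun y => R.liftQ (f ∘ₗ mI.flip y)
        (fun x hx => LinearMap.mem_ker.mpr (by simpa [hmI] using hβ0 y x hx)),
      map_add' := fun y z => by
        apply Submodule.linearMap_qext
        ext x
        simp [hmI, mul_add]
      map_smul' := fun c y => by
        apply Submodule.linearMap_qext
        ext x
        simp [hmI, mul_smul_comm] } with hβdef
  set KR : Submodule k I := LinearMap.ker β with hKRdef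
  haveI : FiniteDimensional k (I ⧸ KR) := fdQuotKer β
  have hKR : ∀ y ∈ KR, ∀ x : I, f (x * y) = 0 := by
    intro y hy x
    have h0 : β y (Submodule.Quotient.mk x) = 0 := by
      rw [LinearMap.mem_ker.mp hy]; simp
    rw [hβdef] at h0
    simpa [hmI, Submodule.liftQ_apply] using h0
  -- raw translate maps
  set cf : (I →ₗ[k] I) →ₗ[k] (I →ₗ[k] k) := LinearMap.llcomp k I I k f with hcf
  set Lraw : I →ₗ[k] Module.Dual k I := cf ∘ₗ mI with hLraw
  set Rraw : I →ₗ[k] Module.Dual k I := cf ∘ₗ mI.flip with hRraw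
  set lraw : A →ₗ[k] Module.Dual k I := cf ∘ₗ l with hlraw
  set rraw : A →ₗ[k] Module.Dual k I := cf ∘ₗ r.flip with hrraw
  have vL : ∀ x z : I, Lraw x z = f (x * z) := by
    intro x z; simp [hLraw, hcf, hmI]
  have vR : ∀ y z : I, Rraw y z = f (z * y) := by
    intro y z; simp [hRraw, hcf, hmI]
  have vl : ∀ (a : A) (z : I), lraw a z = f (l a z) := by
    intro a z; simp [hlraw, hcf]
  have vr : ∀ (b : A) (z : I), rraw b z = f (r z b) := by
    intro b z; simp [hrraw, hcf]
  set lrRaw : A →ₗ[k] A →ₗ[k] Module.Dual k I :=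
    LinearMap.mk₂ k (fun a b => f ∘ₗ (l a ∘ₗ r.flip b))
      (fun _ _ _ => by ext z; simp) (fun _ _ _ => by ext z; simp)
      (fun _ _ _ => by ext z; simp) (fun _ _ _ => by ext z; simp) with hlrRaw
  have vlr : ∀ (a b : A) (z : I), lrRaw a b z = f (l a (r z b)) := by
    intro a b z; simp [hlrRaw]
  set LRRaw : I →ₗ[k] I →ₗ[k] Module.Dual k I :=
    LinearMap.mk₂ k (fun x y => f ∘ₗ (mI x ∘ₗ mI.flip y))
      (fun _ _ _ => by ext z; simp) (fun _ _ _ => by ext z; simp)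
      (fun _ _ _ => by ext z; simp) (fun _ _ _ => by ext z; simp) with hLRRaw
  have vLR : ∀ x y z : I, LRRaw x y z = f (x * (z * y)) := by
    intro x y z; simp [hLRRaw, hmI]
  set LrRaw : I →ₗ[k] A →ₗ[k] Module.Dual k I :=
    LinearMap.mk₂ k (fun x b => f ∘ₗ (mI x ∘ₗ r.flip b))
      (fun _ _ _ => by ext z; simp) (fun _ _ _ => by ext z; simp)
      (fun _ _ _ => by ext z; simp) (fun _ _ _ => by ext z; simp) with hLrRaw
  have vLr : ∀ (x : I) (b : A) (z : I), LrRaw x b z = f (x * r z b) := by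
    intro x b z; simp [hLrRaw, hmI]
  set RlRaw : A →ₗ[k] I →ₗ[k] Module.Dual k I :=
    LinearMap.mk₂ k (fun a y => f ∘ₗ (mI.flip y ∘ₗ l a))
      (fun _ _ _ => by ext z; simp) (fun _ _ _ => by ext z; simp)
      (fun _ _ _ => by ext z; simp) (fun _ _ _ => by ext z; simp) with hRlRaw
  have vRl : ∀ (a : A) (y z : I), RlRaw a y z = f (l a z * y) := by
    intro a y z; simp [hRlRaw, hmI]
  -- vanishing statements
  have hLv : R ≤ LinearMap.ker Lraw := fun x hx => LinearMap.mem_ker.mpr (by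
    ext z; rw [vL]; simpa using hRf _ (hRm x hx z))
  have hRv : KR ≤ LinearMap.ker Rraw := fun y hy => LinearMap.mem_ker.mpr (by
    ext z; rw [vR]; simpa using hKR y hy z)
  have hlv : Jl ≤ LinearMap.ker lraw := fun a ha => LinearMap.mem_ker.mpr (by
    ext z; rw [vl]; simpa using hNlf _ (hJl a ha z))
  have hrv : Jr ≤ LinearMap.ker rraw := fun a ha => LinearMap.mem_ker.mpr (by
    ext z; rw [vr]; simpa using hNrf _ (hJr a ha z))
  have hlrP : ∀ a ∈ Jl, lrRaw a = 0 := fun a ha => by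
    ext b z; rw [vlr]; simpa using hNlf _ (hJl a ha (r z b))
  have hlrQ : ∀ b ∈ Jr, ∀ a, lrRaw a b = 0 := fun b hb a => by
    ext z; rw [vlr, ← h3]; simpa using hNrf _ (hJr b hb (l a z))
  have hLRP : ∀ x ∈ R, LRRaw x = 0 := fun x hx => by
    ext y z; rw [vLR]; simpa using hRf _ (hRm x hx _)
  have hLRQ : ∀ y ∈ KR, ∀ x, LRRaw x y = 0 := fun y hy x => by
    ext z; rw [vLR, ← mul_assoc]; simpa using hKR y hy (x * z)
  have hLrP : ∀ x ∈ R, LrRaw x = 0 := fun x hx => by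
    ext b z; rw [vLr]; simpa using hRf _ (hRm x hx _)
  have hLrQ : ∀ b ∈ Jr, ∀ x, LrRaw x b = 0 := fun b hb x => by
    ext z; rw [vLr, ← h6]; simpa using hNrf _ (hJr b hb (x * z))
  have hRlP : ∀ a ∈ Jl, RlRaw a = 0 := fun a ha => by
    ext y z; rw [vRl, ← h4]; simpa using hNlf _ (hJl a ha _)
  have hRlQ : ∀ y ∈ KR, ∀ a, RlRaw a y = 0 := fun y hy a => by
    ext z; rw [vRl]; simpa using hKR y hy (l a z)
  -- the finite-dimensional space of translates
  set WF := LinearMap.range (LinearMap.toSpanSingleton k (Module.Dual k I) f) with hWF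
  set WL := LinearMap.range (R.liftQ Lraw hLv) with hWL
  set WR := LinearMap.range (KR.liftQ Rraw hRv) with hWR
  set Wl := LinearMap.range (Jl.liftQ lraw hlv) with hWl
  set Wr := LinearMap.range (Jr.liftQ rraw hrv) with hWr
  set Wlr := LinearMap.range (TensorProduct.lift (biDescend Jl Jr lrRaw hlrP hlrQ)) with hWlr
  set WLR := LinearMap.range (TensorProduct.lift (biDescend R KR LRRaw hLRP hLRQ)) with hWLR
  set WLr := LinearMap.range (TensorProduct.lift (biDescend R Jr LrRaw hLrP hLrQ)) with hWLr
  set WRl := LinearMap.range (TensorProduct.lift (biDescend Jl KR RlRaw hRlP hRlQ)) with hWRl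
  set W := WF ⊔ WL ⊔ WR ⊔ Wl ⊔ Wr ⊔ Wlr ⊔ WLR ⊔ WLr ⊔ WRl with hW
  haveI hWfd : FiniteDimensional k ↥W := by
    rw [hW, hWF, hWL, hWR, hWl, hWr, hWlr, hWLR, hWLr, hWRl]
    infer_instance
  -- inclusions of the pieces
  have leWF : WF ≤ W := by
    rw [hW]
    exact le_sup_left.trans (le_sup_left.trans (le_sup_left.trans (le_sup_left.trans
      (le_sup_left.trans (le_sup_left.trans (le_sup_left.trans le_sup_left))))))
  have leWL : WL ≤ W := by
    rw [hW]
    exact le_sup_right.trans (le_sup_left.trans (le_sup_left.trans (le_sup_left.trans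
      (le_sup_left.trans (le_sup_left.trans (le_sup_left.trans le_sup_left))))))
  have leWR : WR ≤ W := by
    rw [hW]
    exact le_sup_right.trans (le_sup_left.trans (le_sup_left.trans (le_sup_left.trans
      (le_sup_left.trans (le_sup_left.trans le_sup_left)))))
  have leWl : Wl ≤ W := by
    rw [hW]
    exact le_sup_right.trans (le_sup_left.trans (le_sup_left.trans (le_sup_left.trans
      (le_sup_left.trans le_sup_left))))
  have leWr : Wr ≤ W := by
    rw [hW]
    exact le_sup_right.trans (le_sup_left.trans (le_sup_left.trans (le_sup_left.trans
      le_sup_left)))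
  have leWlr : Wlr ≤ W := by
    rw [hW]
    exact le_sup_right.trans (le_sup_left.trans (le_sup_left.trans le_sup_left))
  have leWLR : WLR ≤ W := by
    rw [hW]
    exact le_sup_right.trans (le_sup_left.trans le_sup_left)
  have leWLr : WLr ≤ W := by
    rw [hW]
    exact le_sup_right.trans le_sup_left
  have leWRl : WRl ≤ W := by
    rw [hW]
    exact le_sup_right
  -- membership criteria
  have mem_f : f ∈ W := by
    refine leWF ?_
    rw [hWF]
    exact ⟨1, by rw [LinearMap.toSpanSingleton_apply, one_smul]⟩
  have mem_L : ∀ (x : I) (g : Module.Dual k I), (∀ z, g z = f (x * z)) → g ∈ W := by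
    intro x g hg
    have hgeq : g = (R.liftQ Lraw hLv) (Submodule.Quotient.mk x) := by
      ext z; rw [hg z, Submodule.liftQ_apply, vL]
    rw [hgeq]
    refine leWL ?_
    rw [hWL]
    exact LinearMap.mem_range_self _ _
  have mem_R : ∀ (y : I) (g : Module.Dual k I), (∀ z, g z = f (z * y)) → g ∈ W := by
    intro y g hg
    have hgeq : g = (KR.liftQ Rraw hRv) (Submodule.Quotient.mk y) := by
      ext z; rw [hg z, Submodule.liftQ_apply, vR]
    rw [hgeq]
    refine leWR ?_
    rw [hWR]
    exact LinearMap.mem_range_self _ _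
  have mem_l : ∀ (a : A) (g : Module.Dual k I), (∀ z, g z = f (l a z)) → g ∈ W := by
    intro a g hg
    have hgeq : g = (Jl.liftQ lraw hlv) (Submodule.Quotient.mk a) := by
      ext z; rw [hg z, Submodule.liftQ_apply, vl]
    rw [hgeq]
    refine leWl ?_
    rw [hWl]
    exact LinearMap.mem_range_self _ _
  have mem_r : ∀ (b : A) (g : Module.Dual k I), (∀ z, g z = f (r z b)) → g ∈ W := by
    intro b g hg
    have hgeq : g = (Jr.liftQ rraw hrv) (Submodule.Quotient.mk b) := by
      ext z; rw [hg z, Submodule.liftQ_apply, vr]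
    rw [hgeq]
    refine leWr ?_
    rw [hWr]
    exact LinearMap.mem_range_self _ _
  have mem_lr : ∀ (a b : A) (g : Module.Dual k I), (∀ z, g z = f (l a (r z b))) → g ∈ W := by
    intro a b g hg
    have hgeq : g = TensorProduct.lift (biDescend Jl Jr lrRaw hlrP hlrQ)
        ((Submodule.Quotient.mk a) ⊗ₜ[k] (Submodule.Quotient.mk b)) := by
      ext z; rw [hg z, TensorProduct.lift.tmul, biDescend_apply, vlr]
    rw [hgeq]
    refine leWlr ?_
    rw [hWlr]
    exact LinearMap.mem_range_self _ _
  have mem_LR : ∀ (x y : I) (g : Module.Dual k I), (∀ z, g z = f (x * (z * y))) → g ∈ W := by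
    intro x y g hg
    have hgeq : g = TensorProduct.lift (biDescend R KR LRRaw hLRP hLRQ)
        ((Submodule.Quotient.mk x) ⊗ₜ[k] (Submodule.Quotient.mk y)) := by
      ext z; rw [hg z, TensorProduct.lift.tmul, biDescend_apply, vLR]
    rw [hgeq]
    refine leWLR ?_
    rw [hWLR]
    exact LinearMap.mem_range_self _ _
  have mem_Lr : ∀ (x : I) (b : A) (g : Module.Dual k I), (∀ z, g z = f (x * r z b)) → g ∈ W := by
    intro x b g hg
    have hgeq : g = TensorProduct.lift (biDescend R Jr LrRaw hLrP hLrQ)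
        ((Submodule.Quotient.mk x) ⊗ₜ[k] (Submodule.Quotient.mk b)) := by
      ext z; rw [hg z, TensorProduct.lift.tmul, biDescend_apply, vLr]
    rw [hgeq]
    refine leWLr ?_
    rw [hWLr]
    exact LinearMap.mem_range_self _ _
  have mem_Rl : ∀ (a : A) (y : I) (g : Module.Dual k I), (∀ z, g z = f (l a z * y)) → g ∈ W := by
    intro a y g hg
    have hgeq : g = TensorProduct.lift (biDescend Jl KR RlRaw hRlP hRlQ)
        ((Submodule.Quotient.mk a) ⊗ₜ[k] (Submodule.Quotient.mk y)) := by
      ext z; rw [hg z, TensorProduct.lift.tmul, biDescend_apply, vRl]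
    rw [hgeq]
    refine leWRl ?_
    rw [hWRl]
    exact LinearMap.mem_range_self _ _
  -- stability of W under precomposition with the four kinds of operators
  have stabL : ∀ (c : I) (g : Module.Dual k I), g ∈ W → g ∘ₗ mI c ∈ W := by
    intro c g hg
    have key : W ≤ Submodule.comap (LinearMap.lcomp k k (mI c)) W := by
      conv_lhs => rw [hW]
      refine sup_le (sup_le (sup_le (sup_le (sup_le (sup_le (sup_le (sup_le ?_ ?_) ?_) ?_) ?_) ?_) ?_) ?_) ?_
      · intro g' hg'
        rw [hWF, LinearMap.mem_range] at hg'
        obtain ⟨cc, rfl⟩ := hg'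
        refine Submodule.mem_comap.mpr ?_
        rw [LinearMap.toSpanSingleton_apply, map_smul]
        refine Submodule.smul_mem _ _ (mem_L c _ fun z => ?_)
        simp [hmI]
      · intro g' hg'
        rw [hWL, LinearMap.mem_range] at hg'
        obtain ⟨q, rfl⟩ := hg'
        obtain ⟨x, rfl⟩ := Submodule.mkQ_surjective R q
        refine Submodule.mem_comap.mpr (mem_L (x * c) _ fun z => ?_)
        simp only [LinearMap.lcomp_apply, Submodule.mkQ_apply, Submodule.liftQ_apply, vL,
          hmI, LinearMap.mul_apply', LinearMap.flip_apply]
        rw [mul_assoc]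
      · intro g' hg'
        rw [hWR, LinearMap.mem_range] at hg'
        obtain ⟨q, rfl⟩ := hg'
        obtain ⟨y, rfl⟩ := Submodule.mkQ_surjective KR q
        refine Submodule.mem_comap.mpr (mem_LR c y _ fun z => ?_)
        simp only [LinearMap.lcomp_apply, Submodule.mkQ_apply, Submodule.liftQ_apply, vR,
          hmI, LinearMap.mul_apply', LinearMap.flip_apply]
        rw [mul_assoc]
      · intro g' hg'
        rw [hWl, LinearMap.mem_range] at hg'
        obtain ⟨q, rfl⟩ := hg'
        obtain ⟨a, rfl⟩ := Submodule.mkQ_surjective Jl q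
        refine Submodule.mem_comap.mpr (mem_L (l a c) _ fun z => ?_)
        simp only [LinearMap.lcomp_apply, Submodule.mkQ_apply, Submodule.liftQ_apply, vl,
          hmI, LinearMap.mul_apply', LinearMap.flip_apply]
        rw [h4]
      · intro g' hg'
        rw [hWr, LinearMap.mem_range] at hg'
        obtain ⟨q, rfl⟩ := hg'
        obtain ⟨b, rfl⟩ := Submodule.mkQ_surjective Jr q
        refine Submodule.mem_comap.mpr (mem_Lr c b _ fun z => ?_)
        simp only [LinearMap.lcomp_apply, Submodule.mkQ_apply, Submodule.liftQ_apply, vr,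
          hmI, LinearMap.mul_apply', LinearMap.flip_apply]
        rw [h6]
      · intro g' hg'
        rw [hWlr, LinearMap.mem_range] at hg'
        obtain ⟨q, rfl⟩ := hg'
        induction q using TensorProduct.induction_on with
        | zero => simp only [map_zero]; exact Submodule.zero_mem _
        | tmul u v =>
          obtain ⟨a, rfl⟩ := Submodule.mkQ_surjective Jl u
          obtain ⟨b, rfl⟩ := Submodule.mkQ_surjective Jr v
          refine Submodule.mem_comap.mpr (mem_Lr (l a c) b _ fun z => ?_)
          simp only [LinearMap.lcomp_apply, Submodule.mkQ_apply, TensorProduct.lift.tmul,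
            biDescend_apply, vlr, hmI, LinearMap.mul_apply', LinearMap.flip_apply]
          rw [h6, h4]
        | add p q hp hq => simp only [map_add]; exact Submodule.add_mem _ hp hq
      · intro g' hg'
        rw [hWLR, LinearMap.mem_range] at hg'
        obtain ⟨q, rfl⟩ := hg'
        induction q using TensorProduct.induction_on with
        | zero => simp only [map_zero]; exact Submodule.zero_mem _
        | tmul u v =>
          obtain ⟨x, rfl⟩ := Submodule.mkQ_surjective R u
          obtain ⟨y, rfl⟩ := Submodule.mkQ_surjective KR v
          refine Submodule.mem_comap.mpr (mem_LR (x * c) y _ fun z => ?_)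
          simp only [LinearMap.lcomp_apply, Submodule.mkQ_apply, TensorProduct.lift.tmul,
            biDescend_apply, vLR, hmI, LinearMap.mul_apply', LinearMap.flip_apply]
          simp [mul_assoc]
        | add p q hp hq => simp only [map_add]; exact Submodule.add_mem _ hp hq
      · intro g' hg'
        rw [hWLr, LinearMap.mem_range] at hg'
        obtain ⟨q, rfl⟩ := hg'
        induction q using TensorProduct.induction_on with
        | zero => simp only [map_zero]; exact Submodule.zero_mem _
        | tmul u v =>
          obtain ⟨x, rfl⟩ := Submodule.mkQ_surjective R u
          obtain ⟨b, rfl⟩ := Submodule.mkQ_surjective Jr v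
          refine Submodule.mem_comap.mpr (mem_Lr (x * c) b _ fun z => ?_)
          simp only [LinearMap.lcomp_apply, Submodule.mkQ_apply, TensorProduct.lift.tmul,
            biDescend_apply, vLr, hmI, LinearMap.mul_apply', LinearMap.flip_apply]
          rw [h6]
          simp [mul_assoc]
        | add p q hp hq => simp only [map_add]; exact Submodule.add_mem _ hp hq
      · intro g' hg'
        rw [hWRl, LinearMap.mem_range] at hg'
        obtain ⟨q, rfl⟩ := hg'
        induction q using TensorProduct.induction_on with
        | zero => simp only [map_zero]; exact Submodule.zero_mem _
        | tmul u v =>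
          obtain ⟨a, rfl⟩ := Submodule.mkQ_surjective Jl u
          obtain ⟨y, rfl⟩ := Submodule.mkQ_surjective KR v
          refine Submodule.mem_comap.mpr (mem_LR (l a c) y _ fun z => ?_)
          simp only [LinearMap.lcomp_apply, Submodule.mkQ_apply, TensorProduct.lift.tmul,
            biDescend_apply, vRl, hmI, LinearMap.mul_apply', LinearMap.flip_apply]
          rw [h4]
          simp [mul_assoc]
        | add p q hp hq => simp only [map_add]; exact Submodule.add_mem _ hp hq
    have hg2 := key hg
    rw [Submodule.mem_comap] at hg2
    rwa [LinearMap.lcomp_apply'] at hg2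
  have stabR : ∀ (w : I) (g : Module.Dual k I), g ∈ W → g ∘ₗ mI.flip w ∈ W := by
    intro w g hg
    have key : W ≤ Submodule.comap (LinearMap.lcomp k k (mI.flip w)) W := by
      conv_lhs => rw [hW]
      refine sup_le (sup_le (sup_le (sup_le (sup_le (sup_le (sup_le (sup_le ?_ ?_) ?_) ?_) ?_) ?_) ?_) ?_) ?_
      · intro g' hg'
        rw [hWF, LinearMap.mem_range] at hg'
        obtain ⟨cc, rfl⟩ := hg'
        refine Submodule.mem_comap.mpr ?_
        rw [LinearMap.toSpanSingleton_apply, map_smul]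
        refine Submodule.smul_mem _ _ (mem_R w _ fun z => ?_)
        simp [hmI]
      · intro g' hg'
        rw [hWL, LinearMap.mem_range] at hg'
        obtain ⟨q, rfl⟩ := hg'
        obtain ⟨x, rfl⟩ := Submodule.mkQ_surjective R q
        refine Submodule.mem_comap.mpr (mem_LR x w _ fun z => ?_)
        simp only [LinearMap.lcomp_apply, Submodule.mkQ_apply, Submodule.liftQ_apply, vL,
          hmI, LinearMap.mul_apply', LinearMap.flip_apply]
      · intro g' hg'
        rw [hWR, LinearMap.mem_range] at hg'
        obtain ⟨q, rfl⟩ := hg'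
        obtain ⟨y, rfl⟩ := Submodule.mkQ_surjective KR q
        refine Submodule.mem_comap.mpr (mem_R (w * y) _ fun z => ?_)
        simp only [LinearMap.lcomp_apply, Submodule.mkQ_apply, Submodule.liftQ_apply, vR,
          hmI, LinearMap.mul_apply', LinearMap.flip_apply]
        rw [mul_assoc]
      · intro g' hg'
        rw [hWl, LinearMap.mem_range] at hg'
        obtain ⟨q, rfl⟩ := hg'
        obtain ⟨a, rfl⟩ := Submodule.mkQ_surjective Jl q
        refine Submodule.mem_comap.mpr (mem_Rl a w _ fun z => ?_)
        simp only [LinearMap.lcomp_apply, Submodule.mkQ_apply, Submodule.liftQ_apply, vl,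
          hmI, LinearMap.mul_apply', LinearMap.flip_apply]
        rw [h4]
      · intro g' hg'
        rw [hWr, LinearMap.mem_range] at hg'
        obtain ⟨q, rfl⟩ := hg'
        obtain ⟨b, rfl⟩ := Submodule.mkQ_surjective Jr q
        refine Submodule.mem_comap.mpr (mem_R (r w b) _ fun z => ?_)
        simp only [LinearMap.lcomp_apply, Submodule.mkQ_apply, Submodule.liftQ_apply, vr,
          hmI, LinearMap.mul_apply', LinearMap.flip_apply]
        rw [h6]
      · intro g' hg'
        rw [hWlr, LinearMap.mem_range] at hg'
        obtain ⟨q, rfl⟩ := hg'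
        induction q using TensorProduct.induction_on with
        | zero => simp only [map_zero]; exact Submodule.zero_mem _
        | tmul u v =>
          obtain ⟨a, rfl⟩ := Submodule.mkQ_surjective Jl u
          obtain ⟨b, rfl⟩ := Submodule.mkQ_surjective Jr v
          refine Submodule.mem_comap.mpr (mem_Rl a (r w b) _ fun z => ?_)
          simp only [LinearMap.lcomp_apply, Submodule.mkQ_apply, TensorProduct.lift.tmul,
            biDescend_apply, vlr, hmI, LinearMap.mul_apply', LinearMap.flip_apply]
          rw [h6, h4]
        | add p q hp hq => simp only [map_add]; exact Submodule.add_mem _ hp hq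
      · intro g' hg'
        rw [hWLR, LinearMap.mem_range] at hg'
        obtain ⟨q, rfl⟩ := hg'
        induction q using TensorProduct.induction_on with
        | zero => simp only [map_zero]; exact Submodule.zero_mem _
        | tmul u v =>
          obtain ⟨x, rfl⟩ := Submodule.mkQ_surjective R u
          obtain ⟨y, rfl⟩ := Submodule.mkQ_surjective KR v
          refine Submodule.mem_comap.mpr (mem_LR x (w * y) _ fun z => ?_)
          simp only [LinearMap.lcomp_apply, Submodule.mkQ_apply, TensorProduct.lift.tmul,
            biDescend_apply, vLR, hmI, LinearMap.mul_apply', LinearMap.flip_apply]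
          simp [mul_assoc]
        | add p q hp hq => simp only [map_add]; exact Submodule.add_mem _ hp hq
      · intro g' hg'
        rw [hWLr, LinearMap.mem_range] at hg'
        obtain ⟨q, rfl⟩ := hg'
        induction q using TensorProduct.induction_on with
        | zero => simp only [map_zero]; exact Submodule.zero_mem _
        | tmul u v =>
          obtain ⟨x, rfl⟩ := Submodule.mkQ_surjective R u
          obtain ⟨b, rfl⟩ := Submodule.mkQ_surjective Jr v
          refine Submodule.mem_comap.mpr (mem_LR x (r w b) _ fun z => ?_)
          simp only [LinearMap.lcomp_apply, Submodule.mkQ_apply, TensorProduct.lift.tmul,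
            biDescend_apply, vLr, hmI, LinearMap.mul_apply', LinearMap.flip_apply]
          rw [h6]
        | add p q hp hq => simp only [map_add]; exact Submodule.add_mem _ hp hq
      · intro g' hg'
        rw [hWRl, LinearMap.mem_range] at hg'
        obtain ⟨q, rfl⟩ := hg'
        induction q using TensorProduct.induction_on with
        | zero => simp only [map_zero]; exact Submodule.zero_mem _
        | tmul u v =>
          obtain ⟨a, rfl⟩ := Submodule.mkQ_surjective Jl u
          obtain ⟨y, rfl⟩ := Submodule.mkQ_surjective KR v
          refine Submodule.mem_comap.mpr (mem_Rl a (w * y) _ fun z => ?_)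
          simp only [LinearMap.lcomp_apply, Submodule.mkQ_apply, TensorProduct.lift.tmul,
            biDescend_apply, vRl, hmI, LinearMap.mul_apply', LinearMap.flip_apply]
          rw [h4]
          simp [mul_assoc]
        | add p q hp hq => simp only [map_add]; exact Submodule.add_mem _ hp hq
    have hg2 := key hg
    rw [Submodule.mem_comap] at hg2
    rwa [LinearMap.lcomp_apply'] at hg2
  have stabl : ∀ (e : A) (g : Module.Dual k I), g ∈ W → g ∘ₗ l e ∈ W := by
    intro e g hg
    have key : W ≤ Submodule.comap (LinearMap.lcomp k k (l e)) W := by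
      conv_lhs => rw [hW]
      refine sup_le (sup_le (sup_le (sup_le (sup_le (sup_le (sup_le (sup_le ?_ ?_) ?_) ?_) ?_) ?_) ?_) ?_) ?_
      · intro g' hg'
        rw [hWF, LinearMap.mem_range] at hg'
        obtain ⟨cc, rfl⟩ := hg'
        refine Submodule.mem_comap.mpr ?_
        rw [LinearMap.toSpanSingleton_apply, map_smul]
        refine Submodule.smul_mem _ _ (mem_l e _ fun z => ?_)
        simp
      · intro g' hg'
        rw [hWL, LinearMap.mem_range] at hg'
        obtain ⟨q, rfl⟩ := hg'
        obtain ⟨x, rfl⟩ := Submodule.mkQ_surjective R q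
        refine Submodule.mem_comap.mpr (mem_L (r x e) _ fun z => ?_)
        simp only [LinearMap.lcomp_apply, Submodule.mkQ_apply, Submodule.liftQ_apply, vL,
          hmI, LinearMap.mul_apply', LinearMap.flip_apply]
        rw [h5]
      · intro g' hg'
        rw [hWR, LinearMap.mem_range] at hg'
        obtain ⟨q, rfl⟩ := hg'
        obtain ⟨y, rfl⟩ := Submodule.mkQ_surjective KR q
        refine Submodule.mem_comap.mpr (mem_Rl e y _ fun z => ?_)
        simp only [LinearMap.lcomp_apply, Submodule.mkQ_apply, Submodule.liftQ_apply, vR,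
          hmI, LinearMap.mul_apply', LinearMap.flip_apply]
      · intro g' hg'
        rw [hWl, LinearMap.mem_range] at hg'
        obtain ⟨q, rfl⟩ := hg'
        obtain ⟨a, rfl⟩ := Submodule.mkQ_surjective Jl q
        refine Submodule.mem_comap.mpr (mem_l (a * e) _ fun z => ?_)
        simp only [LinearMap.lcomp_apply, Submodule.mkQ_apply, Submodule.liftQ_apply, vl,
          hmI, LinearMap.mul_apply', LinearMap.flip_apply]
        rw [h1]
      · intro g' hg'
        rw [hWr, LinearMap.mem_range] at hg'
        obtain ⟨q, rfl⟩ := hg'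
        obtain ⟨b, rfl⟩ := Submodule.mkQ_surjective Jr q
        refine Submodule.mem_comap.mpr (mem_lr e b _ fun z => ?_)
        simp only [LinearMap.lcomp_apply, Submodule.mkQ_apply, Submodule.liftQ_apply, vr,
          hmI, LinearMap.mul_apply', LinearMap.flip_apply]
        rw [h3]
      · intro g' hg'
        rw [hWlr, LinearMap.mem_range] at hg'
        obtain ⟨q, rfl⟩ := hg'
        induction q using TensorProduct.induction_on with
        | zero => simp only [map_zero]; exact Submodule.zero_mem _
        | tmul u v =>
          obtain ⟨a, rfl⟩ := Submodule.mkQ_surjective Jl u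
          obtain ⟨b, rfl⟩ := Submodule.mkQ_surjective Jr v
          refine Submodule.mem_comap.mpr (mem_lr (a * e) b _ fun z => ?_)
          simp only [LinearMap.lcomp_apply, Submodule.mkQ_apply, TensorProduct.lift.tmul,
            biDescend_apply, vlr, hmI, LinearMap.mul_apply', LinearMap.flip_apply]
          rw [h3, h1]
        | add p q hp hq => simp only [map_add]; exact Submodule.add_mem _ hp hq
      · intro g' hg'
        rw [hWLR, LinearMap.mem_range] at hg'
        obtain ⟨q, rfl⟩ := hg'
        induction q using TensorProduct.induction_on with
        | zero => simp only [map_zero]; exact Submodule.zero_mem _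
        | tmul u v =>
          obtain ⟨x, rfl⟩ := Submodule.mkQ_surjective R u
          obtain ⟨y, rfl⟩ := Submodule.mkQ_surjective KR v
          refine Submodule.mem_comap.mpr (mem_LR (r x e) y _ fun z => ?_)
          simp only [LinearMap.lcomp_apply, Submodule.mkQ_apply, TensorProduct.lift.tmul,
            biDescend_apply, vLR, hmI, LinearMap.mul_apply', LinearMap.flip_apply]
          rw [h5, h4]
        | add p q hp hq => simp only [map_add]; exact Submodule.add_mem _ hp hq
      · intro g' hg'
        rw [hWLr, LinearMap.mem_range] at hg'
        obtain ⟨q, rfl⟩ := hg'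
        induction q using TensorProduct.induction_on with
        | zero => simp only [map_zero]; exact Submodule.zero_mem _
        | tmul u v =>
          obtain ⟨x, rfl⟩ := Submodule.mkQ_surjective R u
          obtain ⟨b, rfl⟩ := Submodule.mkQ_surjective Jr v
          refine Submodule.mem_comap.mpr (mem_Lr (r x e) b _ fun z => ?_)
          simp only [LinearMap.lcomp_apply, Submodule.mkQ_apply, TensorProduct.lift.tmul,
            biDescend_apply, vLr, hmI, LinearMap.mul_apply', LinearMap.flip_apply]
          rw [h3, h5]
        | add p q hp hq => simp only [map_add]; exact Submodule.add_mem _ hp hq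
      · intro g' hg'
        rw [hWRl, LinearMap.mem_range] at hg'
        obtain ⟨q, rfl⟩ := hg'
        induction q using TensorProduct.induction_on with
        | zero => simp only [map_zero]; exact Submodule.zero_mem _
        | tmul u v =>
          obtain ⟨a, rfl⟩ := Submodule.mkQ_surjective Jl u
          obtain ⟨y, rfl⟩ := Submodule.mkQ_surjective KR v
          refine Submodule.mem_comap.mpr (mem_Rl (a * e) y _ fun z => ?_)
          simp only [LinearMap.lcomp_apply, Submodule.mkQ_apply, TensorProduct.lift.tmul,
            biDescend_apply, vRl, hmI, LinearMap.mul_apply', LinearMap.flip_apply]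
          rw [h1]
        | add p q hp hq => simp only [map_add]; exact Submodule.add_mem _ hp hq
    have hg2 := key hg
    rw [Submodule.mem_comap] at hg2
    rwa [LinearMap.lcomp_apply'] at hg2
  have stabr : ∀ (d : A) (g : Module.Dual k I), g ∈ W → g ∘ₗ r.flip d ∈ W := by
    intro d g hg
    have key : W ≤ Submodule.comap (LinearMap.lcomp k k (r.flip d)) W := by
      conv_lhs => rw [hW]
      refine sup_le (sup_le (sup_le (sup_le (sup_le (sup_le (sup_le (sup_le ?_ ?_) ?_) ?_) ?_) ?_) ?_) ?_) ?_
      · intro g' hg'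
        rw [hWF, LinearMap.mem_range] at hg'
        obtain ⟨cc, rfl⟩ := hg'
        refine Submodule.mem_comap.mpr ?_
        rw [LinearMap.toSpanSingleton_apply, map_smul]
        refine Submodule.smul_mem _ _ (mem_r d _ fun z => ?_)
        simp
      · intro g' hg'
        rw [hWL, LinearMap.mem_range] at hg'
        obtain ⟨q, rfl⟩ := hg'
        obtain ⟨x, rfl⟩ := Submodule.mkQ_surjective R q
        refine Submodule.mem_comap.mpr (mem_Lr x d _ fun z => ?_)
        simp only [LinearMap.lcomp_apply, Submodule.mkQ_apply, Submodule.liftQ_apply, vL,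
          hmI, LinearMap.mul_apply', LinearMap.flip_apply]
      · intro g' hg'
        rw [hWR, LinearMap.mem_range] at hg'
        obtain ⟨q, rfl⟩ := hg'
        obtain ⟨y, rfl⟩ := Submodule.mkQ_surjective KR q
        refine Submodule.mem_comap.mpr (mem_R (l d y) _ fun z => ?_)
        simp only [LinearMap.lcomp_apply, Submodule.mkQ_apply, Submodule.liftQ_apply, vR,
          hmI, LinearMap.mul_apply', LinearMap.flip_apply]
        rw [h5]
      · intro g' hg'
        rw [hWl, LinearMap.mem_range] at hg'
        obtain ⟨q, rfl⟩ := hg'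
        obtain ⟨a, rfl⟩ := Submodule.mkQ_surjective Jl q
        refine Submodule.mem_comap.mpr (mem_lr a d _ fun z => ?_)
        simp only [LinearMap.lcomp_apply, Submodule.mkQ_apply, Submodule.liftQ_apply, vl,
          hmI, LinearMap.mul_apply', LinearMap.flip_apply]
      · intro g' hg'
        rw [hWr, LinearMap.mem_range] at hg'
        obtain ⟨q, rfl⟩ := hg'
        obtain ⟨b, rfl⟩ := Submodule.mkQ_surjective Jr q
        refine Submodule.mem_comap.mpr (mem_r (d * b) _ fun z => ?_)
        simp only [LinearMap.lcomp_apply, Submodule.mkQ_apply, Submodule.liftQ_apply, vr,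
          hmI, LinearMap.mul_apply', LinearMap.flip_apply]
        rw [h2]
      · intro g' hg'
        rw [hWlr, LinearMap.mem_range] at hg'
        obtain ⟨q, rfl⟩ := hg'
        induction q using TensorProduct.induction_on with
        | zero => simp only [map_zero]; exact Submodule.zero_mem _
        | tmul u v =>
          obtain ⟨a, rfl⟩ := Submodule.mkQ_surjective Jl u
          obtain ⟨b, rfl⟩ := Submodule.mkQ_surjective Jr v
          refine Submodule.mem_comap.mpr (mem_lr a (d * b) _ fun z => ?_)
          simp only [LinearMap.lcomp_apply, Submodule.mkQ_apply, TensorProduct.lift.tmul,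
            biDescend_apply, vlr, hmI, LinearMap.mul_apply', LinearMap.flip_apply]
          rw [h2]
        | add p q hp hq => simp only [map_add]; exact Submodule.add_mem _ hp hq
      · intro g' hg'
        rw [hWLR, LinearMap.mem_range] at hg'
        obtain ⟨q, rfl⟩ := hg'
        induction q using TensorProduct.induction_on with
        | zero => simp only [map_zero]; exact Submodule.zero_mem _
        | tmul u v =>
          obtain ⟨x, rfl⟩ := Submodule.mkQ_surjective R u
          obtain ⟨y, rfl⟩ := Submodule.mkQ_surjective KR v
          refine Submodule.mem_comap.mpr (mem_LR x (l d y) _ fun z => ?_)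
          simp only [LinearMap.lcomp_apply, Submodule.mkQ_apply, TensorProduct.lift.tmul,
            biDescend_apply, vLR, hmI, LinearMap.mul_apply', LinearMap.flip_apply]
          rw [h5]
        | add p q hp hq => simp only [map_add]; exact Submodule.add_mem _ hp hq
      · intro g' hg'
        rw [hWLr, LinearMap.mem_range] at hg'
        obtain ⟨q, rfl⟩ := hg'
        induction q using TensorProduct.induction_on with
        | zero => simp only [map_zero]; exact Submodule.zero_mem _
        | tmul u v =>
          obtain ⟨x, rfl⟩ := Submodule.mkQ_surjective R u
          obtain ⟨b, rfl⟩ := Submodule.mkQ_surjective Jr v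
          refine Submodule.mem_comap.mpr (mem_Lr x (d * b) _ fun z => ?_)
          simp only [LinearMap.lcomp_apply, Submodule.mkQ_apply, TensorProduct.lift.tmul,
            biDescend_apply, vLr, hmI, LinearMap.mul_apply', LinearMap.flip_apply]
          rw [h2]
        | add p q hp hq => simp only [map_add]; exact Submodule.add_mem _ hp hq
      · intro g' hg'
        rw [hWRl, LinearMap.mem_range] at hg'
        obtain ⟨q, rfl⟩ := hg'
        induction q using TensorProduct.induction_on with
        | zero => simp only [map_zero]; exact Submodule.zero_mem _
        | tmul u v =>
          obtain ⟨a, rfl⟩ := Submodule.mkQ_surjective Jl u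
          obtain ⟨y, rfl⟩ := Submodule.mkQ_surjective KR v
          refine Submodule.mem_comap.mpr (mem_Rl a (l d y) _ fun z => ?_)
          simp only [LinearMap.lcomp_apply, Submodule.mkQ_apply, TensorProduct.lift.tmul,
            biDescend_apply, vRl, hmI, LinearMap.mul_apply', LinearMap.flip_apply]
          rw [← h3, h5]
        | add p q hp hq => simp only [map_add]; exact Submodule.add_mem _ hp hq
    have hg2 := key hg
    rw [Submodule.mem_comap] at hg2
    rwa [LinearMap.lcomp_apply'] at hg2
  -- the subspace N
  set ε : I →ₗ[k] Module.Dual k ↥W := W.subtype.dualMap ∘ₗ Module.Dual.eval k I with hε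
  have hεval : ∀ (x : I) (g : ↥W), ε x g = (g : Module.Dual k I) x := by
    intro x g
    rw [hε]
    simp [Module.Dual.eval_apply]
  haveI : Module.Free k ↥W := Module.Free.of_divisionRing k ↥W
  haveI : FiniteDimensional k (Module.Dual k ↥W) := Module.Finite.linearMap k k ↥W k
  have hNiff : ∀ x : I, x ∈ LinearMap.ker ε ↔ ∀ g ∈ W, g x = 0 := by
    intro x
    rw [LinearMap.mem_ker]
    constructor
    · intro h g hg
      have h' := LinearMap.congr_fun h (⟨g, hg⟩ : ↥W)
      rw [hεval] at h'
      simpa using h'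
    · intro h
      ext g
      rw [hεval]
      simpa using h g.1 g.2
  refine ⟨LinearMap.ker ε, fdQuotKer ε, ?_, ?_, ?_, ?_, ?_⟩
  · intro x hx
    exact (hNiff x).mp hx f mem_f
  · intro x hx y
    refine (hNiff _).mpr fun g hg => ?_
    have h' := (hNiff x).mp hx _ (stabR y g hg)
    simpa [hmI] using h'
  · intro x hx y
    refine (hNiff _).mpr fun g hg => ?_
    have h' := (hNiff x).mp hx _ (stabL y g hg)
    simpa [hmI] using h'
  · intro x hx a
    refine (hNiff _).mpr fun g hg => ?_
    have h' := (hNiff x).mp hx _ (stabl a g hg)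
    simpa using h'
  · intro x hx a
    refine (hNiff _).mpr fun g hg => ?_
    have h' := (hNiff x).mp hx _ (stabr a g hg)
    simpa using h'

set_option maxHeartbeats 1000000 in
set_option synthInstance.maxHeartbeats 400000 in
/-- **Lemma 3.11.** Let `(A, I)` be a Dorroh pair of algebras,
`I°` the finite dual of the algebra `I`, `I°_{(A)} = I_l° ∩ I_r°` the finite dual of the
`A`-bimodule `I`, and `I^d = I° ∩ I°_{(A)}`. Then
(a) `I^d` is a subcoalgebra of `I°`;
(b) `I^d` is an `A°`-subbicomodule of `I°_{(A)}`;
(c) the coactions of `I^d` are compatible with its comultiplication, so that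
`(A°, I^d)` is a Dorroh pair of coalgebras. -/
theorem dorroh_finDual_pair {A I : Type}
    [NonUnitalRing A] [Module k A] [SMulCommClass k A A] [IsScalarTower k A A]
    [NonUnitalRing I] [Module k I] [SMulCommClass k I I] [IsScalarTower k I I]
    (l : A →ₗ[k] I →ₗ[k] I) (r : I →ₗ[k] A →ₗ[k] I)
    (h1 : ∀ (a b : A) (x : I), l (a * b) x = l a (l b x))
    (h2 : ∀ (x : I) (a b : A), r x (a * b) = r (r x a) b)
    (h3 : ∀ (a : A) (x : I) (b : A), r (l a x) b = l a (r x b))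
    (h4 : ∀ (a : A) (x y : I), l a (x * y) = l a x * y)
    (h5 : ∀ (x : I) (a : A) (y : I), r x a * y = x * l a y)
    (h6 : ∀ (x y : I) (a : A), r (x * y) a = x * r y a)
    (f : Module.Dual k I)
    (hf : f ∈ finDual k I ∩ (finDualModL l ∩ finDualModR r)) :
    -- (a) `Δ(I^d) ⊆ I^d ⊗ I^d`
    (∃ (n : ℕ) (g h : Fin n → Module.Dual k I),
      (∀ i, g i ∈ finDual k I ∩ (finDualModL l ∩ finDualModR r) ∧
            h i ∈ finDual k I ∩ (finDualModL l ∩ finDualModR r)) ∧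
      ∀ x y : I, f (x * y) = ∑ i, g i x * h i y) ∧
    -- (b) `ρ_l(I^d) ⊆ A° ⊗ I^d` and `ρ_r(I^d) ⊆ I^d ⊗ A°`
    (∃ (m : ℕ) (u : Fin m → Module.Dual k A) (v : Fin m → Module.Dual k I),
      (∀ i, u i ∈ finDual k A ∧
            v i ∈ finDual k I ∩ (finDualModL l ∩ finDualModR r)) ∧
      ∀ (a : A) (x : I), f (l a x) = ∑ i, u i a * v i x) ∧
    (∃ (s : ℕ) (w : Fin s → Module.Dual k I) (z : Fin s → Module.Dual k A),
      (∀ i, w i ∈ finDual k I ∩ (finDualModL l ∩ finDualModR r) ∧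
            z i ∈ finDual k A) ∧
      ∀ (x : I) (a : A), f (r x a) = ∑ i, w i x * z i a) ∧
    -- (c) compatibility of the coactions with the comultiplication:
    -- `(Δ⊗1)ρ_r = (1⊗ρ_r)Δ`, `(1⊗Δ)ρ_l = (ρ_l⊗1)Δ`, `(ρ_r⊗1)Δ = (1⊗ρ_l)Δ`
    ((∀ (x y : I) (a : A), f (r (x * y) a) = f (x * r y a)) ∧
     (∀ (a : A) (x y : I), f (l a (x * y)) = f (l a x * y)) ∧
     (∀ (x : I) (a : A) (y : I), f (r x a * y) = f (x * l a y))) := by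
  classical
  obtain ⟨N, hNfd, hNf, hNR, hNL, hNl, hNr⟩ := exists_stable l r h1 h2 h3 h4 h5 h6 f hf
  haveI := hNfd
  set n := Module.finrank k (I ⧸ N) with hn
  set bb := Module.finBasis k (I ⧸ N) with hbb
  choose t ht using fun j : Fin n => Submodule.mkQ_surjective N (bb j)
  have decomp : ∀ x : I, x - ∑ j, bb.repr (N.mkQ x) j • t j ∈ N := by
    intro x
    have h0 : N.mkQ (x - ∑ j, bb.repr (N.mkQ x) j • t j) = 0 := by
      rw [map_sub, map_sum]
      simp only [map_smul, ht]
      rw [bb.sum_repr (N.mkQ x)]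
      simp
    rwa [Submodule.mkQ_apply, Submodule.Quotient.mk_eq_zero] at h0
  -- the coordinate functionals belong to `I^d`
  have memCoord : ∀ j : Fin n,
      ((bb.coord j).comp N.mkQ) ∈ finDual k I ∩ (finDualModL l ∩ finDualModR r) := by
    intro j
    have hvan : ∀ x ∈ N, ((bb.coord j).comp N.mkQ) x = 0 := by
      intro x hx
      have h0 : N.mkQ x = 0 := by
        simpa [Submodule.Quotient.mk_eq_zero] using hx
      simp [h0]
    simp only [finDual, finDualModL, finDualModR, Set.mem_inter_iff, Set.mem_setOf_eq]
    exact ⟨⟨N, fun x hx b => hNR x hx b, hNfd, hvan⟩,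
           ⟨N, fun x hx a => hNl x hx a, hNfd, hvan⟩,
           ⟨N, fun x hx a => hNr x hx a, hNfd, hvan⟩⟩
  -- the left translates of `f` belong to `I^d`
  have memF : ∀ j : Fin n,
      (f ∘ₗ LinearMap.mul k I (t j)) ∈ finDual k I ∩ (finDualModL l ∩ finDualModR r) := by
    intro j
    have hvan : ∀ x ∈ N, (f ∘ₗ LinearMap.mul k I (t j)) x = 0 := by
      intro x hx
      have h0 := hNf _ (hNL x hx (t j))
      simpa using h0
    simp only [finDual, finDualModL, finDualModR, Set.mem_inter_iff, Set.mem_setOf_eq]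
    exact ⟨⟨N, fun x hx b => hNR x hx b, hNfd, hvan⟩,
           ⟨N, fun x hx a => hNl x hx a, hNfd, hvan⟩,
           ⟨N, fun x hx a => hNr x hx a, hNfd, hvan⟩⟩
  refine ⟨⟨n, fun j => (bb.coord j).comp N.mkQ, fun j => f ∘ₗ LinearMap.mul k I (t j),
      fun j => ⟨memCoord j, memF j⟩, ?_⟩, ?_, ?_, ?_⟩
  · -- (a)
    intro x y
    have h0 := hNf _ (hNR _ (decomp x) y)
    rw [sub_mul, Finset.sum_mul] at h0
    simp only [smul_mul_assoc, map_sub, map_sum, map_smul, smul_eq_mul] at h0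
    rw [sub_eq_zero] at h0
    rw [h0]
    simp [Module.Basis.coord_apply]
    rfl
  · -- (b), left coaction
    have hJstab : ∀ (a : A) (x : I), x ∈ N → l a x ∈ N := fun a x hx => hNl x hx a
    set Θ := actQ l N hJstab with hΘ
    haveI : FiniteDimensional k (A ⧸ LinearMap.ker Θ) := fdQuotKer Θ
    have hJ : ∀ a ∈ LinearMap.ker Θ, ∀ x : I, l a x ∈ N := by
      intro a ha x
      have h0 : Θ a (Submodule.Quotient.mk x) = 0 := by
        rw [LinearMap.mem_ker.mp ha]; simp
      rw [hΘ, actQ_apply] at h0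
      simpa [Submodule.Quotient.mk_eq_zero] using h0
    have hJmul : ∀ a ∈ LinearMap.ker Θ, ∀ b : A, a * b ∈ LinearMap.ker Θ := by
      intro a ha b
      rw [LinearMap.mem_ker, hΘ]
      apply Submodule.linearMap_qext
      ext x
      simp only [LinearMap.comp_apply, Submodule.mkQ_apply, actQ_apply,
        LinearMap.zero_comp, LinearMap.zero_apply]
      rw [h1]
      simpa [Submodule.Quotient.mk_eq_zero] using hJ a ha (l b x)
    refine ⟨n, fun j => f ∘ₗ l.flip (t j), fun j => (bb.coord j).comp N.mkQ,
      fun j => ⟨?_, memCoord j⟩, ?_⟩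
    · simp only [finDual, Set.mem_setOf_eq]
      refine ⟨LinearMap.ker Θ, hJmul, inferInstance, ?_⟩
      intro a ha
      have h0 := hNf _ (hJ a ha (t j))
      simpa using h0
    · intro a x
      have h0 := hNf _ (hNl _ (decomp x) a)
      simp only [map_sub, map_sum, map_smul, smul_eq_mul] at h0
      rw [sub_eq_zero] at h0
      rw [h0]
      simp [Module.Basis.coord_apply, mul_comm]
      rfl
  · -- (b), right coaction
    have hJstab : ∀ (a : A) (x : I), x ∈ N → r.flip a x ∈ N := fun a x hx => hNr x hx a
    set Θ := actQ r.flip N hJstab with hΘ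
    haveI : FiniteDimensional k (A ⧸ LinearMap.ker Θ) := fdQuotKer Θ
    have hJ : ∀ a ∈ LinearMap.ker Θ, ∀ x : I, r x a ∈ N := by
      intro a ha x
      have h0 : Θ a (Submodule.Quotient.mk x) = 0 := by
        rw [LinearMap.mem_ker.mp ha]; simp
      rw [hΘ, actQ_apply] at h0
      simpa [Submodule.Quotient.mk_eq_zero, LinearMap.flip_apply] using h0
    have hJmul : ∀ a ∈ LinearMap.ker Θ, ∀ b : A, a * b ∈ LinearMap.ker Θ := by
      intro a ha b
      rw [LinearMap.mem_ker, hΘ]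
      apply Submodule.linearMap_qext
      ext x
      simp only [LinearMap.comp_apply, Submodule.mkQ_apply, actQ_apply,
        LinearMap.zero_comp, LinearMap.zero_apply, LinearMap.flip_apply]
      rw [h2]
      simpa [Submodule.Quotient.mk_eq_zero] using hNr _ (hJ a ha x) b
    refine ⟨n, fun j => (bb.coord j).comp N.mkQ, fun j => f ∘ₗ r (t j),
      fun j => ⟨memCoord j, ?_⟩, ?_⟩
    · simp only [finDual, Set.mem_setOf_eq]
      refine ⟨LinearMap.ker Θ, hJmul, inferInstance, ?_⟩
      intro a ha
      have h0 := hNf _ (hJ a ha (t j))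
      simpa using h0
    · intro x a
      have h0 := hNf _ (hNr _ (decomp x) a)
      simp only [map_sub, map_sum, map_smul, LinearMap.sub_apply, LinearMap.sum_apply,
        LinearMap.smul_apply, smul_eq_mul] at h0
      rw [sub_eq_zero] at h0
      rw [h0]
      simp [Module.Basis.coord_apply]
      rfl
  · -- (c)
    exact ⟨fun x y a => by rw [h6], fun a x y => by rw [h4], fun x a y => by rw [h5]⟩

end
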